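/- Let A_1, ..., A_N be finite sets with |A_i ∩ A_j| ≤ 1 for all i ≠ j, and suppose min_i |A_i| ≥ C·N for some real C ≥ 1. Then |⋃_{i=1}^N A_i| ≥ (1 − 1/(2C)) · ∑_{i=1}^N |A_i|. -/
import Mathlib

lemma aux_bonferroni {α : Type*} [DecidableEq α] {N : ℕ} (A : Fin N → Finset α)
    (h : ∀ i j : Fin N, i ≠ j → ((A i) ∩ (A j)).card ≤ 1) (s : Finset (Fin N)) :
    2 * ∑ i ∈ s, ((A i).card : ℤ) ≤
      2 * ((s.biUnion A).card : ℤ) + s.card * (s.card - 1) := by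
  induction s using Finset.induction_on with
  | empty => simp
  | @insert a s ha ih =>
    have hinter : ((A a ∩ s.biUnion A).card : ℤ) ≤ s.card := by
      have : A a ∩ s.biUnion A = s.biUnion (fun i => A a ∩ A i) := by
        ext x; simp [Finset.mem_biUnion]; tauto
      rw [this]
      calc ((s.biUnion (fun i => A a ∩ A i)).card : ℤ)
          ≤ ∑ i ∈ s, ((A a ∩ A i).card : ℤ) := by
            exact_mod_cast Nat.cast_le.mpr (Finset.card_biUnion_le)
        _ ≤ ∑ _i ∈ s, (1 : ℤ) := by
            apply Finset.sum_le_sum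
            intro i hi
            exact_mod_cast h a i (fun he => ha (he ▸ hi))
        _ = s.card := by simp
    have hunion : ((A a).card : ℤ) + ((s.biUnion A).card : ℤ) - s.card ≤
        (((insert a s).biUnion A).card : ℤ) := by
      rw [Finset.biUnion_insert]
      have := Finset.card_union_add_card_inter (A a) (s.biUnion A)
      have := congrArg (Nat.cast : ℕ → ℤ) this
      push_cast at this
      omega
    rw [Finset.sum_insert ha, Finset.card_insert_of_notMem ha]
    push_cast
    nlinarith [ih]

theorem stmt_1 {α : Type*} [DecidableEq α] {N : ℕ} (A : Fin N → Finset α) (C : ℝ)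
    (hC : 1 ≤ C)
    (h : ∀ i j : Fin N, i ≠ j → ((A i) ∩ (A j)).card ≤ 1)
    (hmin : ∀ i : Fin N, C * N ≤ ((A i).card : ℝ)) :
    ((Finset.univ.biUnion A).card : ℝ) ≥
      (1 - 1 / (2 * C)) * ∑ i, ((A i).card : ℝ) := by
  have hint := aux_bonferroni A h Finset.univ
  simp only [Finset.card_univ, Fintype.card_fin] at hint
  have hreal : 2 * ∑ i, ((A i).card : ℝ) ≤
      2 * ((Finset.univ.biUnion A).card : ℝ) + N * (N - 1) := by
    have hc : ((2 * ∑ i, ((A i).card : ℤ) : ℤ) : ℝ) ≤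
        ((2 * ((Finset.univ.biUnion A).card : ℤ) + N * (N - 1) : ℤ) : ℝ) := by
      exact_mod_cast hint
    push_cast at hc
    convert hc using 2 <;> push_cast <;> ring_nf
  have hsum : C * N * N ≤ ∑ i, ((A i).card : ℝ) := by
    calc C * N * N = ∑ _i : Fin N, C * N := by
          simp [mul_comm]
      _ ≤ ∑ i, ((A i).card : ℝ) := Finset.sum_le_sum (fun i _ => hmin i)
  have hCpos : (0:ℝ) < C := lt_of_lt_of_le one_pos hC
  rw [ge_iff_le, sub_mul, one_mul, div_mul_eq_mul_div, sub_le_iff_le_add,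
    ← sub_le_iff_le_add', le_div_iff₀ (by linarith)]
  -- goal: (∑ - card(⋃)) * (2C) ≤ ∑
  nlinarith [hreal, hsum, Finset.sum_nonneg (fun i (_ : i ∈ Finset.univ) => Nat.cast_nonneg (A i).card : ∀ i ∈ Finset.univ, (0:ℝ) ≤ ((A i).card:ℝ))]
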